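/- Let X be a countable set and let k : X × X → ℂ be a normalised kernel of positive type (k(x,x) = 1 for all x). Then the Schur multiplier m_k : B(ℓ²(X)) → B(ℓ²(X)), defined on matrix entries by (m_k(T))_{x,y} = k(x,y)·T_{x,y}, is a well-defined bounded linear map with ‖m_k(T)‖ ≤ ‖T‖ for all T ∈ B(ℓ²(X)). -/

import Mathlib

open scoped ENNReal
open Metric Set Function

noncomputable section

universe u

variable {X : Type*}

/-- The pointwise product of an `ℓ∞` function and an `ℓ²` function is again `ℓ²`. -/
theorem memℓp_two_mul (f : lp (fun _ : X => ℂ) ∞) (ξ : lp (fun _ : X => ℂ) 2) :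
    Memℓp (fun x => f x * ξ x) 2 := by
  apply memℓp_gen
  have h2 : (2 : ℝ≥0∞).toReal = 2 := by norm_num
  rw [h2]
  have hsum : Summable fun x => ‖f‖ ^ (2:ℝ) * ‖ξ x‖ ^ (2:ℝ) :=
    (by simpa [h2] using (lp.memℓp ξ).summable (by rw [h2]; norm_num) :
      Summable fun x => ‖ξ x‖ ^ (2:ℝ)).mul_left _
  refine Summable.of_nonneg_of_le (fun x => by positivity) (fun x => ?_) hsum
  have h1 : ‖f x * ξ x‖ ≤ ‖f‖ * ‖ξ x‖ := by
    rw [norm_mul]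
    exact mul_le_mul_of_nonneg_right (lp.norm_apply_le_norm (by norm_num) f x) (norm_nonneg _)
  calc ‖f x * ξ x‖ ^ (2:ℝ) ≤ (‖f‖ * ‖ξ x‖) ^ (2:ℝ) := by
        gcongr
    _ = ‖f‖ ^ (2:ℝ) * ‖ξ x‖ ^ (2:ℝ) := by
        rw [Real.mul_rpow (norm_nonneg _) (norm_nonneg _)]

/-- Multiplication by a bounded function `f ∈ ℓ∞(X)`, as a bounded operator on `ℓ²(X)`. -/
def mulOp (f : lp (fun _ : X => ℂ) ∞) :
    lp (fun _ : X => ℂ) 2 →L[ℂ] lp (fun _ : X => ℂ) 2 :=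
  LinearMap.mkContinuous
    { toFun := fun ξ => ⟨fun x => f x * ξ x, memℓp_two_mul f ξ⟩
      map_add' := fun ξ η => Subtype.ext <| funext fun x => by
        simp only [lp.coeFn_add, Pi.add_apply, mul_add]
      map_smul' := fun c ξ => Subtype.ext <| funext fun x => by
        simp only [lp.coeFn_smul, Pi.smul_apply, smul_eq_mul, RingHom.id_apply]
        ring }
    ‖f‖ (by
      intro ξ
      refine lp.norm_le_of_forall_sum_le (by norm_num) (by positivity) fun s => ?_
      have hb : ∀ x ∈ s, ‖f x * ξ x‖ ^ ((2:ℝ≥0∞).toReal)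
          ≤ ‖f‖ ^ ((2:ℝ≥0∞).toReal) * ‖ξ x‖ ^ ((2:ℝ≥0∞).toReal) := by
        intro x _
        rw [← Real.mul_rpow (norm_nonneg _) (norm_nonneg _)]
        refine Real.rpow_le_rpow (norm_nonneg _) ?_ (by norm_num)
        rw [norm_mul]
        exact mul_le_mul_of_nonneg_right (lp.norm_apply_le_norm (by norm_num) f x) (norm_nonneg _)
      calc ∑ x ∈ s, ‖f x * ξ x‖ ^ ((2:ℝ≥0∞).toReal)
          ≤ ∑ x ∈ s, ‖f‖ ^ ((2:ℝ≥0∞).toReal) * ‖ξ x‖ ^ ((2:ℝ≥0∞).toReal) :=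
            Finset.sum_le_sum hb
        _ = ‖f‖ ^ ((2:ℝ≥0∞).toReal) * ∑ x ∈ s, ‖ξ x‖ ^ ((2:ℝ≥0∞).toReal) := by
            rw [Finset.mul_sum]
        _ ≤ ‖f‖ ^ ((2:ℝ≥0∞).toReal) * ‖ξ‖ ^ ((2:ℝ≥0∞).toReal) :=
            mul_le_mul_of_nonneg_left (lp.sum_rpow_le_norm_rpow (by norm_num) ξ s)
              (Real.rpow_nonneg (norm_nonneg _) _)
        _ = (‖f‖ * ‖ξ‖) ^ ((2:ℝ≥0∞).toReal) :=
            (Real.mul_rpow (norm_nonneg _) (norm_nonneg _)).symm)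

/-- The standard basis vector `δ_x` of `ℓ²(X)`. -/
def delta [DecidableEq X] (x : X) : lp (fun _ : X => ℂ) 2 := lp.single 2 x (1 : ℂ)

/-- The matrix entry `T_{x,y} = ⟨δ_x, T δ_y⟩` of a bounded operator on `ℓ²(X)`. -/
def entry [DecidableEq X] (T : lp (fun _ : X => ℂ) 2 →L[ℂ] lp (fun _ : X => ℂ) 2)
    (x y : X) : ℂ :=
  inner (𝕜 := ℂ) (delta x) (T (delta y))

open scoped ComplexOrder

/-! ### Auxiliary material: Gram representation of a kernel of positive type -/

theorem kern_herm (k : X → X → ℂ)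
    (hpos : ∀ (n : ℕ) (x : Fin n → X) (lam : Fin n → ℂ),
      0 ≤ ∑ i, ∑ j, (starRingEnd ℂ) (lam i) * lam j * k (x i) (x j)) (x y : X) :
    (starRingEnd ℂ) (k y x) = k x y := by
  have h0 : ∀ z : X, 0 ≤ k z z := by
    intro z
    have := hpos 1 ![z] ![1]
    simpa using this
  have h1 := hpos 2 ![x, y] ![1, 1]
  have h2 := hpos 2 ![x, y] ![1, Complex.I]
  rw [Fin.sum_univ_two] at h1 h2
  simp only [Fin.sum_univ_two, Matrix.cons_val_zero, Matrix.cons_val_one, Matrix.head_cons,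
    map_one, one_mul, mul_one, Complex.conj_I] at h1 h2
  have e1 : (0:ℂ) ≤ k x x + k x y + (k y x + k y y) := h1
  have e2 : (0:ℂ) ≤ k x x + Complex.I * k x y
      + (-Complex.I * k y x + -Complex.I * Complex.I * k y y) := h2
  have hxx := h0 x
  have hyy := h0 y
  rw [Complex.le_def] at e1 e2 hxx hyy
  simp only [Complex.add_im, Complex.add_re, Complex.zero_im, Complex.zero_re,
    Complex.mul_im, Complex.mul_re, Complex.I_re, Complex.I_im, Complex.neg_im,
    Complex.neg_re] at e1 e2 hxx hyy
  apply Complex.ext <;> simp only [Complex.conj_re, Complex.conj_im] <;>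
    nlinarith [e1.2, e2.2, hxx.2, hyy.2]

/-- The semi-inner product on finitely supported functions induced by a kernel. -/
def kinner (k : X → X → ℂ) (f g : X →₀ ℂ) : ℂ :=
  f.sum fun x c => g.sum fun y d => (starRingEnd ℂ) c * d * k x y

theorem kinner_single (k : X → X → ℂ) (x y : X) :
    kinner k (Finsupp.single x 1) (Finsupp.single y 1) = k x y := by
  rw [kinner, Finsupp.sum_single_index, Finsupp.sum_single_index] <;>
    simp [Finsupp.sum_single_index]

theorem kinner_self_nonneg (k : X → X → ℂ)
    (hpos : ∀ (n : ℕ) (x : Fin n → X) (lam : Fin n → ℂ),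
      0 ≤ ∑ i, ∑ j, (starRingEnd ℂ) (lam i) * lam j * k (x i) (x j)) (f : X →₀ ℂ) :
    0 ≤ kinner k f f := by
  classical
  set s := f.support
  have e := s.equivFin
  have := hpos s.card (fun i => (e.symm i : X)) (fun i => f (e.symm i : X))
  refine le_of_le_of_eq this ?_
  rw [kinner]
  unfold Finsupp.sum
  rw [← Finset.sum_coe_sort s (fun x => ∑ y ∈ s, (starRingEnd ℂ) (f x) * f y * k x y)]
  rw [← Equiv.sum_comp e.symm]
  refine Finset.sum_congr rfl fun i _ => ?_
  rw [← Finset.sum_coe_sort s, ← Equiv.sum_comp e.symm]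

theorem kinner_conj_symm (k : X → X → ℂ)
    (hpos : ∀ (n : ℕ) (x : Fin n → X) (lam : Fin n → ℂ),
      0 ≤ ∑ i, ∑ j, (starRingEnd ℂ) (lam i) * lam j * k (x i) (x j)) (f g : X →₀ ℂ) :
    (starRingEnd ℂ) (kinner k g f) = kinner k f g := by
  unfold kinner Finsupp.sum
  rw [map_sum]
  rw [Finset.sum_comm]
  refine Finset.sum_congr rfl fun x _ => ?_
  rw [map_sum]
  refine Finset.sum_congr rfl fun y _ => ?_
  simp only [map_mul, Complex.conj_conj, kern_herm k hpos]
  ring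

theorem kinner_add_left (k : X → X → ℂ) (f f' g : X →₀ ℂ) :
    kinner k (f + f') g = kinner k f g + kinner k f' g := by
  unfold kinner
  rw [Finsupp.sum_add_index']
  · intro x
    simp
  · intro x c c'
    rw [← Finsupp.sum_add]
    refine Finsupp.sum_congr fun y _ => ?_
    rw [map_add]
    ring

theorem kinner_smul_left (k : X → X → ℂ) (f g : X →₀ ℂ) (c : ℂ) :
    kinner k (c • f) g = (starRingEnd ℂ) c * kinner k f g := by
  unfold kinner
  rw [Finsupp.sum_smul_index (fun x => by simp), Finsupp.mul_sum]
  refine Finsupp.sum_congr fun x _ => ?_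
  rw [Finsupp.mul_sum]
  refine Finsupp.sum_congr fun y _ => ?_
  simp only [map_mul]
  ring

/-- Every kernel of positive type is a Gram kernel: `k x y = ∑ᵢ conj (a i x) * a i y`. -/
theorem exists_gram {Y : Type u} (k : Y → Y → ℂ)
    (hpos : ∀ (n : ℕ) (x : Fin n → Y) (lam : Fin n → ℂ),
      0 ≤ ∑ i, ∑ j, (starRingEnd ℂ) (lam i) * lam j * k (x i) (x j)) :
    ∃ (ι : Type u) (a : ι → Y → ℂ),
      ∀ x y : Y, HasSum (fun i => (starRingEnd ℂ) (a i x) * a i y) (k x y) := by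
  classical
  letI icore : PreInnerProductSpace.Core ℂ (Y →₀ ℂ) :=
    { inner := kinner k
      conj_inner_symm := kinner_conj_symm k hpos
      re_inner_nonneg := fun f => by
        have h := kinner_self_nonneg k hpos f
        rw [Complex.le_def] at h
        exact h.1
      add_left := kinner_add_left k
      smul_left := kinner_smul_left k }
  letI : SeminormedAddCommGroup (Y →₀ ℂ) :=
    InnerProductSpace.Core.toSeminormedAddCommGroup (𝕜 := ℂ) (F := Y →₀ ℂ)
  letI : NormedSpace ℂ (Y →₀ ℂ) :=
    InnerProductSpace.Core.toNormedSpace (𝕜 := ℂ) (F := Y →₀ ℂ)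
  letI : InnerProductSpace ℂ (Y →₀ ℂ) :=
    { inner := kinner k
      norm_sq_eq_re_inner := fun f => by
        have h : ‖f‖ = Real.sqrt (RCLike.re (kinner k f f)) := rfl
        rw [h]
        exact Real.sq_sqrt (icore.re_inner_nonneg f)
      conj_inner_symm := kinner_conj_symm k hpos
      add_left := kinner_add_left k
      smul_left := kinner_smul_left k }
  let H := SeparationQuotient (Y →₀ ℂ)
  let H' := UniformSpace.Completion H
  let v : Y → H' := fun x => ((SeparationQuotient.mk (Finsupp.single x (1:ℂ)) : H) : H')
  have hv : ∀ x y : Y, inner (𝕜 := ℂ) (v x) (v y) = k x y := by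
    intro x y
    show inner (𝕜 := ℂ) ((SeparationQuotient.mk (Finsupp.single x (1:ℂ)) : H) : H') _ = _
    rw [UniformSpace.Completion.inner_coe, SeparationQuotient.inner_mk_mk]
    exact kinner_single k x y
  obtain ⟨w, b, -⟩ := exists_hilbertBasis ℂ H'
  refine ⟨w, fun i x => inner (𝕜 := ℂ) (b i) (v x), fun x y => ?_⟩
  have h := b.hasSum_inner_mul_inner (v x) (v y)
  rw [hv x y] at h
  have heq : (fun i : w => (starRingEnd ℂ) (inner (𝕜 := ℂ) (b i) (v x))
        * inner (𝕜 := ℂ) (b i) (v y))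
      = fun i : w => inner (𝕜 := ℂ) (v x) (b i) * inner (𝕜 := ℂ) (b i) (v y) :=
    funext fun i => congrArg (fun z => z * inner (𝕜 := ℂ) (b i) (v y))
      (inner_conj_symm (𝕜 := ℂ) (v x) (b i))
  rw [heq]
  exact h

/-! ### Auxiliary material: the operators `V` and `T ⊗ 1` -/

theorem rpow_toReal_two (t : ℝ) : t ^ ((2:ℝ≥0∞)).toReal = t ^ (2:ℕ) := by
  rw [show ((2:ℝ≥0∞)).toReal = ((2:ℕ):ℝ) by norm_num, Real.rpow_natCast]

theorem norm_sq_eq_tsum' {α : Type*} (ξ : lp (fun _ : α => ℂ) 2) :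
    ‖ξ‖ ^ (2:ℕ) = ∑' x, ‖ξ x‖ ^ (2:ℕ) := by
  have h := lp.norm_rpow_eq_tsum (p := 2) (by norm_num) ξ
  simpa [rpow_toReal_two] using h

theorem summable_norm_sq' {α : Type*} (ξ : lp (fun _ : α => ℂ) 2) :
    Summable fun x => ‖ξ x‖ ^ (2:ℕ) := by
  have h := (lp.memℓp ξ).summable (p := 2) (by norm_num)
  simpa [rpow_toReal_two] using h

section SchurOps

variable {ι : Type*} (a : ι → X → ℂ)

/-- The functions `a i`, packaged as elements of `ℓ∞`. -/
def aLinf (hb : ∀ i x, ‖a i x‖ ≤ 1) (i : ι) : lp (fun _ : X => ℂ) ∞ :=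
  ⟨a i, memℓp_infty ⟨1, by rintro r ⟨x, rfl⟩; exact hb i x⟩⟩

theorem V_est (hb : ∀ i x, ‖a i x‖ ≤ 1)
    (hsum : ∀ x : X, HasSum (fun i => ‖a i x‖ ^ (2:ℕ)) 1)
    (ξ : lp (fun _ : X => ℂ) 2) (s : Finset ι) :
    ∑ i ∈ s, ‖(mulOp (aLinf a hb i) ξ : lp (fun _ : X => ℂ) 2)‖ ^ ((2:ℝ≥0∞)).toReal
      ≤ ‖ξ‖ ^ ((2:ℝ≥0∞)).toReal := by
  simp only [rpow_toReal_two]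
  have hterm : ∀ i : ι, ‖(mulOp (aLinf a hb i) ξ : lp (fun _ : X => ℂ) 2)‖ ^ (2:ℕ)
      = ∑' x, ‖a i x‖ ^ 2 * ‖ξ x‖ ^ 2 := by
    intro i
    rw [norm_sq_eq_tsum']
    congr 1
    funext x
    show ‖a i x * ξ x‖ ^ 2 = _
    rw [norm_mul, mul_pow]
  have hsummand : ∀ i : ι, Summable fun x => ‖a i x‖ ^ 2 * ‖ξ x‖ ^ 2 := fun i =>
    (summable_norm_sq' ξ).of_nonneg_of_le (fun x => by positivity)
      (fun x => by
        have h1 : ‖a i x‖ ^ 2 ≤ 1 := by nlinarith [hb i x, norm_nonneg (a i x)]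
        exact mul_le_of_le_one_left (by positivity) h1)
  calc ∑ i ∈ s, ‖(mulOp (aLinf a hb i) ξ : lp (fun _ : X => ℂ) 2)‖ ^ (2:ℕ)
      = ∑ i ∈ s, ∑' x, ‖a i x‖ ^ 2 * ‖ξ x‖ ^ 2 := Finset.sum_congr rfl fun i _ => hterm i
    _ = ∑' x, ∑ i ∈ s, ‖a i x‖ ^ 2 * ‖ξ x‖ ^ 2 := (Summable.tsum_finsetSum fun i _ => hsummand i).symm
    _ ≤ ∑' x, ‖ξ x‖ ^ 2 := by
        refine Summable.tsum_le_tsum (fun x => ?_) (summable_sum fun i _ => hsummand i)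
          (summable_norm_sq' ξ)
        have h := (hsum x).mul_right (‖ξ x‖ ^ 2)
        rw [one_mul] at h
        exact sum_le_hasSum s (fun i _ => by positivity) h
    _ = ‖ξ‖ ^ (2:ℕ) := (norm_sq_eq_tsum' ξ).symm

/-- The isometry `ξ ↦ (a i * ξ)ᵢ` from `ℓ²(X)` into the Hilbert sum of copies of `ℓ²(X)`. -/
def Vop (hb : ∀ i x, ‖a i x‖ ≤ 1)
    (hsum : ∀ x : X, HasSum (fun i => ‖a i x‖ ^ (2:ℕ)) 1) :
    lp (fun _ : X => ℂ) 2 →L[ℂ] lp (fun _ : ι => lp (fun _ : X => ℂ) 2) 2 :=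
  LinearMap.mkContinuous
    { toFun := fun ξ => ⟨fun i => mulOp (aLinf a hb i) ξ, memℓp_gen' (V_est a hb hsum ξ)⟩
      map_add' := fun ξ η => Subtype.ext <| funext fun i => by
        simp only [lp.coeFn_add, Pi.add_apply, map_add]
      map_smul' := fun c ξ => Subtype.ext <| funext fun i => by
        simp only [lp.coeFn_smul, Pi.smul_apply, map_smul, RingHom.id_apply] }
    1 (fun ξ => by
      rw [one_mul]
      exact lp.norm_le_of_forall_sum_le (by norm_num) (norm_nonneg ξ)
        (fun s => V_est a hb hsum ξ s))

theorem Vop_norm_le (hb : ∀ i x, ‖a i x‖ ≤ 1)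
    (hsum : ∀ x : X, HasSum (fun i => ‖a i x‖ ^ (2:ℕ)) 1) : ‖Vop a hb hsum‖ ≤ 1 :=
  LinearMap.mkContinuous_norm_le _ zero_le_one _

theorem ampl_est (T : lp (fun _ : X => ℂ) 2 →L[ℂ] lp (fun _ : X => ℂ) 2)
    (F : lp (fun _ : ι => lp (fun _ : X => ℂ) 2) 2) (s : Finset ι) :
    ∑ i ∈ s, ‖T (F i)‖ ^ ((2:ℝ≥0∞)).toReal ≤ (‖T‖ * ‖F‖) ^ ((2:ℝ≥0∞)).toReal := by
  simp only [rpow_toReal_two]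
  calc ∑ i ∈ s, ‖T (F i)‖ ^ 2 ≤ ∑ i ∈ s, ‖T‖ ^ 2 * ‖F i‖ ^ 2 :=
        Finset.sum_le_sum fun i _ => by
          have h := T.le_opNorm (F i)
          nlinarith [norm_nonneg (T (F i)), norm_nonneg (F i), norm_nonneg T]
    _ = ‖T‖ ^ 2 * ∑ i ∈ s, ‖F i‖ ^ 2 := by rw [Finset.mul_sum]
    _ ≤ ‖T‖ ^ 2 * ‖F‖ ^ 2 := by
        have h := lp.sum_rpow_le_norm_rpow (p := 2) (by norm_num) F s
        simp only [rpow_toReal_two] at h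
        exact mul_le_mul_of_nonneg_left h (by positivity)
    _ = (‖T‖ * ‖F‖) ^ 2 := by ring

/-- The amplification `T ⊗ 1` acting componentwise on the Hilbert sum. -/
def ampl (T : lp (fun _ : X => ℂ) 2 →L[ℂ] lp (fun _ : X => ℂ) 2) :
    lp (fun _ : ι => lp (fun _ : X => ℂ) 2) 2 →L[ℂ] lp (fun _ : ι => lp (fun _ : X => ℂ) 2) 2 :=
  LinearMap.mkContinuous
    { toFun := fun F => ⟨fun i => T (F i), memℓp_gen' (ampl_est T F)⟩
      map_add' := fun F G => Subtype.ext <| funext fun i => by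
        simp only [lp.coeFn_add, Pi.add_apply, map_add]
      map_smul' := fun c F => Subtype.ext <| funext fun i => by
        simp only [lp.coeFn_smul, Pi.smul_apply, map_smul, RingHom.id_apply] }
    ‖T‖ (fun F => by
      exact lp.norm_le_of_forall_sum_le (by norm_num) (by positivity)
        (fun s => ampl_est T F s))

theorem ampl_norm_le (T : lp (fun _ : X => ℂ) 2 →L[ℂ] lp (fun _ : X => ℂ) 2) :
    ‖(ampl T : lp (fun _ : ι => lp (fun _ : X => ℂ) 2) 2 →L[ℂ] _)‖ ≤ ‖T‖ :=
  LinearMap.mkContinuous_norm_le _ (norm_nonneg T) _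

theorem ampl_add (T S : lp (fun _ : X => ℂ) 2 →L[ℂ] lp (fun _ : X => ℂ) 2)
    (F : lp (fun _ : ι => lp (fun _ : X => ℂ) 2) 2) :
    ampl (T + S) F = ampl T F + ampl S F :=
  Subtype.ext <| funext fun i => by
    simp only [lp.coeFn_add, Pi.add_apply]
    show (T + S) (F i) = _
    rw [ContinuousLinearMap.add_apply]
    rfl

theorem ampl_smul (c : ℂ) (T : lp (fun _ : X => ℂ) 2 →L[ℂ] lp (fun _ : X => ℂ) 2)
    (F : lp (fun _ : ι => lp (fun _ : X => ℂ) 2) 2) :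
    ampl (c • T) F = c • ampl T F :=
  Subtype.ext <| funext fun i => by
    simp only [lp.coeFn_smul, Pi.smul_apply]
    show (c • T) (F i) = _
    rw [ContinuousLinearMap.smul_apply]
    rfl

theorem mulOp_delta [DecidableEq X] (f : lp (fun _ : X => ℂ) ∞) (x : X) :
    mulOp f (delta x) = f x • (delta x : lp (fun _ : X => ℂ) 2) :=
  Subtype.ext <| funext fun z => by
    show f z * (delta x : ∀ _ : X, ℂ) z = (f x • (delta x : lp (fun _ : X => ℂ) 2) : lp _ 2) z
    rw [lp.coeFn_smul, Pi.smul_apply, smul_eq_mul]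
    unfold delta
    by_cases hz : z = x
    · subst hz
      rw [lp.single_apply_self]
    · rw [lp.single_apply_ne 2 x _ hz, mul_zero, mul_zero]

end SchurOps

set_option maxHeartbeats 2000000 in
/-- for a normalised kernel of positive type `k` on a countable set `X`,
the Schur multiplier `m_k` is a well-defined bounded linear map on `B(ℓ²(X))` of norm at
most one: there exists a linear map `M` with matrix entries
`(M T)_{x,y} = k x y * T_{x,y}` and `‖M T‖ ≤ ‖T‖` for every `T`. -/
theorem schur_multiplier_exists [Countable X] [DecidableEq X]
    (k : X → X → ℂ)
    (hpos : ∀ (n : ℕ) (x : Fin n → X) (lam : Fin n → ℂ),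
      0 ≤ ∑ i, ∑ j, (starRingEnd ℂ) (lam i) * lam j * k (x i) (x j))
    (hnorm : ∀ x : X, k x x = 1) :
    ∃ M : (lp (fun _ : X => ℂ) 2 →L[ℂ] lp (fun _ : X => ℂ) 2) →ₗ[ℂ]
          (lp (fun _ : X => ℂ) 2 →L[ℂ] lp (fun _ : X => ℂ) 2),
      (∀ (T : lp (fun _ : X => ℂ) 2 →L[ℂ] lp (fun _ : X => ℂ) 2) (x y : X),
        entry (M T) x y = k x y * entry T x y) ∧
      ∀ T : lp (fun _ : X => ℂ) 2 →L[ℂ] lp (fun _ : X => ℂ) 2, ‖M T‖ ≤ ‖T‖ := by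
    classical
  obtain ⟨ι, a, ha⟩ := exists_gram k hpos
  have hsum : ∀ x : X, HasSum (fun i => ‖a i x‖ ^ (2:ℕ)) 1 := by
    intro x
    have h := ha x x
    rw [hnorm x] at h
    have e : ∀ z : ℂ, (starRingEnd ℂ) z * z = ((‖z‖ ^ 2 : ℝ) : ℂ) := by
      intro z
      calc (starRingEnd ℂ) z * z = ((Complex.normSq z : ℝ) : ℂ) := by
            rw [mul_comm, Complex.mul_conj]
        _ = ((‖z‖ ^ 2 : ℝ) : ℂ) := by rw [Complex.normSq_eq_norm_sq]
    rw [show (fun i => (starRingEnd ℂ) (a i x) * a i x)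
        = fun i => ((‖a i x‖ ^ 2 : ℝ) : ℂ) from funext fun i => e _] at h
    have h2 := Complex.hasSum_re h
    simpa only [Complex.ofReal_re, Complex.one_re] using h2
  have hb : ∀ (i : ι) (x : X), ‖a i x‖ ≤ 1 := by
    intro i x
    have h1 : ‖a i x‖ ^ 2 ≤ 1 := le_hasSum (hsum x) i (fun j _ => by positivity)
    nlinarith [norm_nonneg (a i x)]
  set V := Vop a hb hsum with hV
  refine ⟨{ toFun := fun T => (ContinuousLinearMap.adjoint V) ∘L (ampl T) ∘L V
            map_add' := fun T S => by
              ext ξ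
              simp only [ContinuousLinearMap.comp_apply, ContinuousLinearMap.add_apply]
              rw [ampl_add, map_add]
            map_smul' := fun c T => by
              ext ξ
              simp only [ContinuousLinearMap.comp_apply, ContinuousLinearMap.smul_apply,
                RingHom.id_apply]
              rw [ampl_smul, map_smul] }, ?_, ?_⟩
  · intro T x y
    show inner (𝕜 := ℂ) (delta x)
      ((ContinuousLinearMap.adjoint V) ((ampl T) (V (delta y)))) = _
    rw [ContinuousLinearMap.adjoint_inner_right]
    have hs := lp.hasSum_inner (𝕜 := ℂ) (V (delta x)) ((ampl T) (V (delta y)))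
    have hcomp : ∀ i : ι, inner (𝕜 := ℂ) ((V (delta x)) i) (((ampl T) (V (delta y))) i)
        = ((starRingEnd ℂ) (a i x) * a i y) * entry T x y := by
      intro i
      show inner (𝕜 := ℂ) (mulOp (aLinf a hb i) (delta x))
        (T (mulOp (aLinf a hb i) (delta y))) = _
      rw [mulOp_delta, mulOp_delta, map_smul, inner_smul_left, inner_smul_right]
      show (starRingEnd ℂ) (a i x) * (a i y * inner (𝕜 := ℂ) (delta x) (T (delta y))) = _
      rw [entry]
      ring
    rw [funext hcomp] at hs
    exact hs.unique ((ha x y).mul_right (entry T x y))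
  · intro T
    calc ‖(ContinuousLinearMap.adjoint V) ∘L (ampl T) ∘L V‖
        ≤ ‖ContinuousLinearMap.adjoint V‖ * ‖(ampl T) ∘L V‖ :=
          ContinuousLinearMap.opNorm_comp_le _ _
      _ ≤ ‖ContinuousLinearMap.adjoint V‖
          * (‖(ampl T : lp (fun _ : ι => lp (fun _ : X => ℂ) 2) 2 →L[ℂ] _)‖ * ‖V‖) := by
          gcongr
          exact ContinuousLinearMap.opNorm_comp_le _ _
      _ ≤ 1 * (‖T‖ * 1) := by
          rw [ContinuousLinearMap.adjoint.norm_map]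
          have h1 : ‖V‖ ≤ 1 := Vop_norm_le a hb hsum
          have h2 := ampl_norm_le (ι := ι) T
          exact mul_le_mul h1 (mul_le_mul h2 h1 (norm_nonneg _) (norm_nonneg _))
            (by positivity) zero_le_one
      _ = ‖T‖ := by ring
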